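/- Let D be the Dirac operator with Dirichlet boundary conditions on Ω, let P be the orthogonal projection of L₂(Ω) onto the closed subspace of solutions u ∈ L₂(Ω) of the Helmholtz equation (1−Δ)u = 0 (in the distributional sense), and set T := (1+D*D)^{-1} − (1+DD*)^{-1}. Then T = (1⊗P)T. -/

import Mathlib

set_option synthInstance.maxHeartbeats 400000
set_option maxHeartbeats 1000000

noncomputable section

open MeasureTheory Filter

namespace NCGD

/-! ### Singular values and operator ideals (on an abstract Hilbert space) -/

variable {H : Type*} [NormedAddCommGroup H] [InnerProductSpace ℂ H] [CompleteSpace H]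

/-- The `n`-th singular value (approximation number) of a bounded operator. -/
def sval (T : H →L[ℂ] H) (n : ℕ) : ℝ :=
  sInf {c : ℝ | ∃ R : H →L[ℂ] H,
    Module.rank ℂ (LinearMap.range (R : H →ₗ[ℂ] H)) ≤ (n : Cardinal) ∧ ‖T - R‖ = c}

/-- The weak Schatten ideal `𝓛_{p,∞}`. -/
def MemLpW (p : ℝ) (T : H →L[ℂ] H) : Prop :=
  IsCompactOperator T ∧ ∃ C : ℝ, ∀ n : ℕ, sval T n ≤ C * ((n : ℝ) + 1) ^ (-(1 / p))

/-- The Schatten class `𝓛_s`. -/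
def MemSchatten (s : ℝ) (T : H →L[ℂ] H) : Prop :=
  IsCompactOperator T ∧ Summable (fun n => sval T n ^ s)

/-! ### The setting: test functions and weak derivatives on a domain `Ω ⊆ ℝ^d` -/

variable (d N : ℕ)

/-- Euclidean space `ℝ^d`. -/
abbrev E (d : ℕ) := EuclideanSpace ℝ (Fin d)

/-- The spinor fibre `ℂ^N`. -/
abbrev V (N : ℕ) := EuclideanSpace ℂ (Fin N)

/-- The Hilbert space `L₂(Ω, ℂ^N)`. -/
abbrev Hsp (Ω : Set (E d)) := Lp (V N) 2 (volume.restrict Ω)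

variable {d N}

/-- A (vector-valued) test function on `Ω`: smooth, compactly supported inside `Ω`. -/
def IsTestFun {W : Type*} [NormedAddCommGroup W] [NormedSpace ℝ W] (Ω : Set (E d))
    (φ : E d → W) : Prop :=
  ContDiff ℝ (⊤ : ℕ∞) φ ∧ HasCompactSupport φ ∧ tsupport φ ⊆ Ω

/-- The Dirac operator `𝒟 = Σⱼ −i γⱼ ⊗ ∂ⱼ` applied to a differentiable function. -/
def diracOp (γ : Fin d → Matrix (Fin N) (Fin N) ℂ) (φ : E d → V N) : E d → V N := fun x =>
  ∑ j : Fin d, (-Complex.I) •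
    Matrix.toEuclideanLin (γ j) (fderiv ℝ φ x (EuclideanSpace.single j 1))

/-- The Laplacian `Δ = Σⱼ ∂ⱼ²` applied to a twice differentiable function. -/
def lapOp (φ : E d → V N) : E d → V N := fun x =>
  ∑ j : Fin d, fderiv ℝ (fun y => fderiv ℝ φ y (EuclideanSpace.single j 1)) x
    (EuclideanSpace.single j 1)

/-- The family `γ` consists of Euclidean gamma matrices: Hermitian, with
`γⱼγₖ + γₖγⱼ = 2δⱼₖ`. -/
def IsGammaFamily (γ : Fin d → Matrix (Fin N) (Fin N) ℂ) : Prop :=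
  (∀ j, (γ j).IsHermitian) ∧
    ∀ j k, γ j * γ k + γ k * γ j =
      if j = k then (2 : Matrix (Fin N) (Fin N) ℂ) else 0

variable (Ω : Set (E d))

/-- `v = 𝒟 u` distributionally on `Ω` (tested against the formally self-adjoint `𝒟`). -/
def IsWeakDirac (γ : Fin d → Matrix (Fin N) (Fin N) ℂ) (u v : E d → V N) : Prop :=
  ∀ φ : E d → V N, IsTestFun Ω φ →
    ∫ x in Ω, (inner ℂ (diracOp γ φ x) (u x) : ℂ) = ∫ x in Ω, (inner ℂ (φ x) (v x) : ℂ)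

/-- `v = ∂ⱼ u` distributionally on `Ω`. -/
def IsWeakDeriv (j : Fin d) (u v : E d → V N) : Prop :=
  ∀ φ : E d → V N, IsTestFun Ω φ →
    ∫ x in Ω, (inner ℂ (fderiv ℝ φ x (EuclideanSpace.single j 1)) (u x) : ℂ) =
      -∫ x in Ω, (inner ℂ (φ x) (v x) : ℂ)

/-- `w = −Δ u` distributionally on `Ω`. -/
def IsWeakNegLap (u w : E d → V N) : Prop :=
  ∀ φ : E d → V N, IsTestFun Ω φ →
    -∫ x in Ω, (inner ℂ (lapOp φ x) (u x) : ℂ) = ∫ x in Ω, (inner ℂ (φ x) (w x) : ℂ)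

/-- `u ∈ W^{1,2}(Ω, ℂ^N)`: all first order weak derivatives lie in `L₂`. -/
def MemW12 (u : Hsp d N Ω) : Prop :=
  ∀ j : Fin d, ∃ v : Hsp d N Ω, IsWeakDeriv Ω j ⇑u ⇑v

/-- `u ∈ W^{1,2}₀(Ω, ℂ^N)`: `u ∈ W^{1,2}` and `u` is a limit of test functions in the
`W^{1,2}`-norm. -/
def MemW120 (u : Hsp d N Ω) : Prop :=
  ∃ v : Fin d → Hsp d N Ω, (∀ j, IsWeakDeriv Ω j ⇑u ⇑(v j)) ∧
    ∃ φ : ℕ → E d → V N, (∀ n, IsTestFun Ω (φ n)) ∧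
      Tendsto (fun n => ∫ x in Ω, ‖φ n x - u x‖ ^ 2) atTop (nhds 0) ∧
      ∀ j : Fin d, Tendsto (fun n =>
          ∫ x in Ω, ‖fderiv ℝ (φ n) x (EuclideanSpace.single j 1) - (v j) x‖ ^ 2)
        atTop (nhds 0)

/-- `u ∈ W^{2,2}(Ω, ℂ^N)`: weak derivatives up to order two lie in `L₂`. -/
def MemW22 (u : Hsp d N Ω) : Prop :=
  ∀ j : Fin d, ∃ v : Hsp d N Ω, IsWeakDeriv Ω j ⇑u ⇑v ∧
    ∀ k : Fin d, ∃ w : Hsp d N Ω, IsWeakDeriv Ω k ⇑v ⇑w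

/-- `u ∈ W^{1,2}_loc(Ω, ℂ^N)`. -/
def MemW12loc (u : Hsp d N Ω) : Prop :=
  ∀ j : Fin d, ∃ g : E d → V N, IsWeakDeriv Ω j ⇑u g ∧
    ∀ K : Set (E d), IsCompact K → K ⊆ Ω → MemLp g 2 (volume.restrict K)

/-- `u` lies in the domain of the Dirac operator `D` with Dirichlet boundary conditions
(`dom D = W^{1,2}₀`), with `D u = w`. -/
def InDomD (γ : Fin d → Matrix (Fin N) (Fin N) ℂ) (u w : Hsp d N Ω) : Prop :=
  MemW120 Ω u ∧ IsWeakDirac Ω γ ⇑u ⇑w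

/-- `u` lies in the domain of the adjoint `D*`, with `D* u = w`: for all `v ∈ dom D`,
`⟪D v, u⟫ = ⟪v, w⟫`. -/
def InDomDadj (γ : Fin d → Matrix (Fin N) (Fin N) ℂ) (u w : Hsp d N Ω) : Prop :=
  ∀ v z : Hsp d N Ω, InDomD Ω γ v z → (inner ℂ z u : ℂ) = inner ℂ v w

/-- `R = (1 + D*D)⁻¹`. -/
def IsRes1DstarD (γ : Fin d → Matrix (Fin N) (Fin N) ℂ)
    (R : Hsp d N Ω →L[ℂ] Hsp d N Ω) : Prop :=
  ∀ ξ : Hsp d N Ω, ∃ w z : Hsp d N Ω,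
    InDomD Ω γ (R ξ) w ∧ InDomDadj Ω γ w z ∧ R ξ + z = ξ

/-- `R = (1 + DD*)⁻¹`. -/
def IsRes1DDstar (γ : Fin d → Matrix (Fin N) (Fin N) ℂ)
    (R : Hsp d N Ω →L[ℂ] Hsp d N Ω) : Prop :=
  ∀ ξ : Hsp d N Ω, ∃ w z : Hsp d N Ω,
    InDomDadj Ω γ (R ξ) w ∧ InDomD Ω γ w z ∧ R ξ + z = ξ

/-- `M` is the operator `1 ⊗ M_f` of pointwise multiplication by `f`. -/
def IsMulOp (f : E d → ℂ) (M : Hsp d N Ω →L[ℂ] Hsp d N Ω) : Prop :=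
  ∀ u : Hsp d N Ω, ⇑(M u) =ᵐ[volume.restrict Ω] fun x => f x • (u x : V N)

end NCGD

open NCGD MeasureTheory in
/-- `u ∈ L₂(Ω, ℂ^N)` solves the Helmholtz equation `(1 − Δ)u = 0` distributionally. -/
def NCGD.IsHelmholtz {d N : ℕ} (Ω : Set (E d)) (u : Hsp d N Ω) : Prop :=
  ∀ φ : E d → V N, IsTestFun Ω φ →
    ∫ x in Ω, (inner ℂ (φ x - lapOp φ x) ((u : E d → V N) x) : ℂ) = 0

open NCGD MeasureTheory Filter Topology ComplexConjugate

namespace NCGDaux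

variable {d N : ℕ}

local notation "e" j => EuclideanSpace.single j (1:ℝ)

/-- partial derivative -/
def pd (j : Fin d) (φ : E d → V N) : E d → V N := fun x => fderiv ℝ φ x (e j)

lemma contDiff_pd {φ : E d → V N} (hφ : ContDiff ℝ (⊤ : ℕ∞) φ) (j : Fin d) :
    ContDiff ℝ (⊤ : ℕ∞) (pd j φ) := by
  have h1 : ContDiff ℝ (⊤ : ℕ∞) (fderiv ℝ φ) := hφ.fderiv_right (by exact_mod_cast le_top)
  exact (ContinuousLinearMap.apply ℝ (V N) (e j)).contDiff.comp h1

lemma hcs_pd {φ : E d → V N} (hc : HasCompactSupport φ) (j : Fin d) :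
    HasCompactSupport (pd j φ) := by
  apply (hc.fderiv ℝ).mono
  intro x hx
  simp only [Function.mem_support, ne_eq, pd] at hx ⊢
  intro h; exact hx (by rw [h]; rfl)

lemma tsupport_pd {φ : E d → V N} (j : Fin d) : tsupport (pd j φ) ⊆ tsupport φ := by
  apply closure_minimal _ isClosed_closure
  intro x hx
  simp only [Function.mem_support, ne_eq, pd] at hx
  have : fderiv ℝ φ x ≠ 0 := fun h => hx (by rw [h]; rfl)
  exact support_fderiv_subset ℝ this

lemma integral_fderiv_ccs {h : E d → ℂ} (hh : ContDiff ℝ (⊤ : ℕ∞) h)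
    (hc : HasCompactSupport h) (v : E d) : ∫ x, fderiv ℝ h x v = 0 := by
  have hg : Differentiable ℝ (fun _ : E d => (1:ℂ)) := differentiable_const _
  have hint : Integrable (fun x => fderiv ℝ h x v * 1) volume := by
    simp only [mul_one]
    apply Continuous.integrable_of_hasCompactSupport
    · exact ((hh.fderiv_right (m := (⊤:ℕ∞)) (by exact_mod_cast le_top)).continuous).clm_apply continuous_const
    · apply (hc.fderiv ℝ).mono
      intro x hx
      simp only [Function.mem_support, ne_eq] at hx ⊢
      intro h'; exact hx (by rw [h']; rfl)
  have key := integral_mul_fderiv_eq_neg_fderiv_mul_of_integrable (μ := volume)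
      (f := h) (g := fun _ : E d => (1:ℂ)) (v := v)
      hint ?_ ?_ (fun x _ => (hh.differentiable (by simp)) x) (fun x _ => hg x)
  · simp only [fderiv_fun_const, Pi.zero_apply, ContinuousLinearMap.zero_apply, mul_zero,
      mul_one, integral_zero] at key
    exact neg_eq_zero.mp key.symm
  · simp only [fderiv_fun_const, Pi.zero_apply, ContinuousLinearMap.zero_apply, mul_zero]
    exact integrable_zero _ _ _
  · simp only [mul_one]
    exact (hh.continuous).integrable_of_hasCompactSupport hc

end NCGDaux
namespace NCGDaux
open NCGD MeasureTheory Filter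

variable {d N : ℕ} {Ω : Set (E d)}

local notation "e" j => EuclideanSpace.single j (1:ℝ)

lemma diff_top {φ : E d → V N} (hφ : ContDiff ℝ (⊤ : ℕ∞) φ) : Differentiable ℝ φ :=
  hφ.differentiable (by simp)

lemma inner_ccs_left {f g : E d → V N} (hf : HasCompactSupport f) :
    HasCompactSupport (fun x => (inner ℂ (f x) (g x) : ℂ)) := by
  apply hf.mono
  intro x hx
  simp only [Function.mem_support, ne_eq] at hx ⊢
  intro h; exact hx (by rw [h, inner_zero_left])

lemma inner_ccs_right {f g : E d → V N} (hg : HasCompactSupport g) :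
    HasCompactSupport (fun x => (inner ℂ (f x) (g x) : ℂ)) := by
  apply hg.mono
  intro x hx
  simp only [Function.mem_support, ne_eq] at hx ⊢
  intro h; exact hx (by rw [h, inner_zero_right])

lemma integrable_inner_ccs_left {f g : E d → V N} (hf : Continuous f) (hg : Continuous g)
    (hfc : HasCompactSupport f) :
    Integrable (fun x => (inner ℂ (f x) (g x) : ℂ)) (volume.restrict Ω) := by
  exact ((Continuous.inner hf hg).integrable_of_hasCompactSupport (inner_ccs_left hfc)).restrict

/-- Integration by parts -/
lemma ibp {ψ u : E d → V N} (hψ : IsTestFun Ω ψ) (hu : ContDiff ℝ (⊤ : ℕ∞) u) (j : Fin d) :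
    ∫ x in Ω, (inner ℂ (pd j ψ x) (u x) : ℂ) = -∫ x in Ω, (inner ℂ (ψ x) (pd j u x) : ℂ) := by
  obtain ⟨hψs, hψc, hψΩ⟩ := hψ
  have hhs : ContDiff ℝ (⊤ : ℕ∞) (fun x => (inner ℂ (ψ x) (u x) : ℂ)) := ContDiff.inner ℂ hψs hu
  have hhc : HasCompactSupport (fun x => (inner ℂ (ψ x) (u x) : ℂ)) := inner_ccs_left hψc
  have hz := integral_fderiv_ccs hhs hhc (e j)
  have h0 : ∀ x : E d, fderiv ℝ (fun x => (inner ℂ (ψ x) (u x) : ℂ)) x (e j) =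
      inner ℂ (ψ x) (pd j u x) + inner ℂ (pd j ψ x) (u x) := fun x =>
    fderiv_inner_apply (𝕜 := ℂ) (diff_top hψs x) (diff_top hu x) _
  have hA : Integrable (fun x => (inner ℂ (ψ x) (pd j u x) : ℂ)) volume :=
    (Continuous.inner hψs.continuous (contDiff_pd hu j).continuous).integrable_of_hasCompactSupport
      (inner_ccs_left hψc)
  have hB : Integrable (fun x => (inner ℂ (pd j ψ x) (u x) : ℂ)) volume :=
    (Continuous.inner (contDiff_pd hψs j).continuous hu.continuous).integrable_of_hasCompactSupport
      (inner_ccs_left (hcs_pd hψc j))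
  have hsum : (∫ x, (inner ℂ (ψ x) (pd j u x) : ℂ)) + ∫ x, (inner ℂ (pd j ψ x) (u x) : ℂ) = 0 := by
    rw [← integral_add hA hB, ← hz]
    exact integral_congr_ae (Eventually.of_forall fun x => (h0 x).symm)
  have eA : ∫ x in Ω, (inner ℂ (ψ x) (pd j u x) : ℂ) = ∫ x, (inner ℂ (ψ x) (pd j u x) : ℂ) := by
    apply setIntegral_eq_integral_of_forall_compl_eq_zero
    intro x hx
    rw [image_eq_zero_of_notMem_tsupport (fun h => hx (hψΩ h)), inner_zero_left]
  have eB : ∫ x in Ω, (inner ℂ (pd j ψ x) (u x) : ℂ) = ∫ x, (inner ℂ (pd j ψ x) (u x) : ℂ) := by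
    apply setIntegral_eq_integral_of_forall_compl_eq_zero
    intro x hx
    rw [image_eq_zero_of_notMem_tsupport (fun h => hx (hψΩ (tsupport_pd j h))), inner_zero_left]
  rw [eA, eB]
  linear_combination hsum

end NCGDaux
namespace NCGDaux
open NCGD MeasureTheory Filter

variable {d N : ℕ} {Ω : Set (E d)}

local notation "e" j => EuclideanSpace.single j (1:ℝ)

/-- gamma matrix as CLM -/
def Gm (γ : Fin d → Matrix (Fin N) (Fin N) ℂ) (j : Fin d) : V N →L[ℂ] V N :=
  Matrix.toEuclideanCLM (𝕜 := ℂ) (γ j)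

lemma toEuclideanLin_apply_CLM (A : Matrix (Fin N) (Fin N) ℂ) (v : V N) :
    Matrix.toEuclideanLin A v = Matrix.toEuclideanCLM (𝕜 := ℂ) A v := by
  rw [← Matrix.coe_toEuclideanCLM_eq_toEuclideanLin]
  rfl

lemma diracOp_eq (γ : Fin d → Matrix (Fin N) (Fin N) ℂ) (φ : E d → V N) (x : E d) :
    diracOp γ φ x = ∑ j : Fin d, (-Complex.I) • Gm γ j (pd j φ x) := by
  unfold diracOp Gm pd
  simp_rw [toEuclideanLin_apply_CLM]

lemma pd_clm (L : V N →L[ℂ] V N) {u : E d → V N} (hu : ContDiff ℝ (⊤ : ℕ∞) u) (j : Fin d)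
    (x : E d) : pd j (fun y => L (u y)) x = L (pd j u x) := by
  unfold pd
  have h1 : HasFDerivAt (fun y => L (u y))
      ((L.restrictScalars ℝ).comp (fderiv ℝ u x)) x :=
    ((L.restrictScalars ℝ).hasFDerivAt).comp x (diff_top hu x).hasFDerivAt
  rw [h1.fderiv]
  rfl

lemma contDiff_clm_comp (L : V N →L[ℂ] V N) {u : E d → V N} (hu : ContDiff ℝ (⊤ : ℕ∞) u) :
    ContDiff ℝ (⊤ : ℕ∞) (fun y => L (u y)) :=
  (L.restrictScalars ℝ).contDiff.comp hu

lemma contDiff_dirac (γ : Fin d → Matrix (Fin N) (Fin N) ℂ) {φ : E d → V N}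
    (hφ : ContDiff ℝ (⊤ : ℕ∞) φ) : ContDiff ℝ (⊤ : ℕ∞) (diracOp γ φ) := by
  have : ContDiff ℝ (⊤ : ℕ∞) (fun x => ∑ j : Fin d, (-Complex.I) • Gm γ j (pd j φ x)) := by
    apply ContDiff.sum
    intro j _
    exact (contDiff_clm_comp (Gm γ j) (contDiff_pd hφ j)).const_smul _
  have heq : diracOp γ φ = fun x => ∑ j : Fin d, (-Complex.I) • Gm γ j (pd j φ x) :=
    funext fun x => diracOp_eq γ φ x
  rw [heq]
  exact this

lemma dirac_zero_off_tsupport (γ : Fin d → Matrix (Fin N) (Fin N) ℂ) {φ : E d → V N}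
    {x : E d} (hx : x ∉ tsupport φ) : diracOp γ φ x = 0 := by
  rw [diracOp_eq]
  apply Finset.sum_eq_zero
  intro j _
  have : pd j φ x = 0 := by
    unfold pd
    rw [fderiv_of_notMem_tsupport ℝ hx]
    rfl
  rw [this, map_zero, smul_zero]

lemma isTestFun_dirac (γ : Fin d → Matrix (Fin N) (Fin N) ℂ) {φ : E d → V N}
    (hφ : IsTestFun Ω φ) : IsTestFun Ω (diracOp γ φ) := by
  obtain ⟨hs, hc, hΩ⟩ := hφ
  have hsub : tsupport (diracOp γ φ) ⊆ tsupport φ := by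
    apply closure_minimal _ isClosed_closure
    intro x hx
    by_contra hxx
    exact hx (dirac_zero_off_tsupport γ hxx)
  exact ⟨contDiff_dirac γ hs, IsCompact.of_isClosed_subset hc isClosed_closure hsub, hsub.trans hΩ⟩

end NCGDaux
namespace NCGDaux
open NCGD MeasureTheory Filter

variable {d N : ℕ} {Ω : Set (E d)}

lemma inner_gamma {γ : Fin d → Matrix (Fin N) (Fin N) ℂ} (hγ : IsGammaFamily γ) (j : Fin d)
    (v w : V N) : (inner ℂ (Gm γ j v) w : ℂ) = inner ℂ v (Gm γ j w) := by
  have hs := Matrix.isHermitian_iff_isSymmetric.1 (hγ.1 j)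
  have := hs v w
  simpa only [toEuclideanLin_apply_CLM, Gm] using this

/-- Symmetry of the Dirac operator on test functions. -/
lemma dirac_symm {γ : Fin d → Matrix (Fin N) (Fin N) ℂ} (hγ : IsGammaFamily γ)
    {ψ u : E d → V N} (hψ : IsTestFun Ω ψ) (hu : ContDiff ℝ (⊤ : ℕ∞) u) :
    ∫ x in Ω, (inner ℂ (diracOp γ ψ x) (u x) : ℂ) =
      ∫ x in Ω, (inner ℂ (ψ x) (diracOp γ u x) : ℂ) := by
  have lhs : ∀ x : E d, (inner ℂ (diracOp γ ψ x) (u x) : ℂ) =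
      ∑ j : Fin d, Complex.I * inner ℂ (pd j ψ x) (Gm γ j (u x)) := by
    intro x
    rw [diracOp_eq, sum_inner]
    refine Finset.sum_congr rfl fun j _ => ?_
    rw [inner_smul_left, inner_gamma hγ j]
    simp
  have rhs : ∀ x : E d, (inner ℂ (ψ x) (diracOp γ u x) : ℂ) =
      ∑ j : Fin d, (-Complex.I) * inner ℂ (ψ x) (Gm γ j (pd j u x)) := by
    intro x
    rw [diracOp_eq, inner_sum]
    refine Finset.sum_congr rfl fun j _ => ?_
    rw [inner_smul_right]
  rw [integral_congr_ae (Eventually.of_forall lhs), integral_congr_ae (Eventually.of_forall rhs),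
    integral_finset_sum, integral_finset_sum]
  · refine Finset.sum_congr rfl fun j _ => ?_
    rw [MeasureTheory.integral_const_mul, MeasureTheory.integral_const_mul]
    have h1 : ∫ x in Ω, (inner ℂ (pd j ψ x) (Gm γ j (u x)) : ℂ) =
        -∫ x in Ω, (inner ℂ (ψ x) (pd j (fun y => Gm γ j (u y)) x) : ℂ) :=
      ibp hψ (contDiff_clm_comp (Gm γ j) hu) j
    have h2 : ∀ x : E d, pd j (fun y => Gm γ j (u y)) x = Gm γ j (pd j u x) :=
      pd_clm (Gm γ j) hu j
    simp_rw [h2] at h1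
    rw [h1]
    ring
  · intro j _
    exact (integrable_inner_ccs_left hψ.1.continuous
      (contDiff_clm_comp (Gm γ j) (contDiff_pd hu j)).continuous hψ.2.1).const_mul _
  · intro j _
    exact (integrable_inner_ccs_left (contDiff_pd hψ.1 j).continuous
      (contDiff_clm_comp (Gm γ j) hu).continuous (hcs_pd hψ.2.1 j)).const_mul _

end NCGDaux
namespace NCGDaux
open NCGD MeasureTheory Filter

variable {d N : ℕ}

local notation "e" j => EuclideanSpace.single j (1:ℝ)

lemma hasFDerivAt_pd {φ : E d → V N} (hφ : ContDiff ℝ (⊤ : ℕ∞) φ) (j : Fin d) (x : E d) :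
    HasFDerivAt (pd j φ)
      ((ContinuousLinearMap.apply ℝ (V N) (e j)).comp (fderiv ℝ (fderiv ℝ φ) x)) x := by
  have hA : HasFDerivAt (fderiv ℝ φ) (fderiv ℝ (fderiv ℝ φ) x) x := by
    have h1 : ContDiff ℝ (⊤:ℕ∞) (fderiv ℝ φ) :=
      hφ.fderiv_right (m := (⊤:ℕ∞)) (by exact_mod_cast le_top)
    exact (h1.differentiable (by simp) x).hasFDerivAt
  exact (ContinuousLinearMap.apply ℝ (V N) (e j)).hasFDerivAt.comp x hA

lemma pd_dirac {γ : Fin d → Matrix (Fin N) (Fin N) ℂ} {φ : E d → V N}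
    (hφ : ContDiff ℝ (⊤ : ℕ∞) φ) (j : Fin d) (x : E d) :
    pd j (diracOp γ φ) x =
      ∑ l : Fin d, (-Complex.I) • Gm γ l (fderiv ℝ (fderiv ℝ φ) x (e j) (e l)) := by
  have heq : diracOp γ φ = fun y => ∑ l : Fin d, (-Complex.I) • Gm γ l (pd l φ y) :=
    funext fun y => diracOp_eq γ φ y
  have hD : HasFDerivAt (diracOp γ φ)
      (∑ l : Fin d, (-Complex.I) • (((Gm γ l).restrictScalars ℝ).comp
        ((ContinuousLinearMap.apply ℝ (V N) (e l)).comp (fderiv ℝ (fderiv ℝ φ) x)))) x := by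
    rw [heq]
    apply HasFDerivAt.fun_sum
    intro l _
    exact (((Gm γ l).restrictScalars ℝ).hasFDerivAt.comp x (hasFDerivAt_pd hφ l x)).const_smul
      (-Complex.I)
  unfold pd
  rw [hD.fderiv]
  simp [ContinuousLinearMap.sum_apply]

lemma symm_sum {γ : Fin d → Matrix (Fin N) (Fin N) ℂ} (hγ : IsGammaFamily γ)
    (B : Fin d → Fin d → V N) (hB : ∀ j l, B j l = B l j) :
    ∑ j : Fin d, ∑ l : Fin d, Matrix.toEuclideanCLM (𝕜 := ℂ) (γ j * γ l) (B j l) =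
      ∑ j : Fin d, B j j := by
  have hswap : ∑ j : Fin d, ∑ l : Fin d, Matrix.toEuclideanCLM (𝕜 := ℂ) (γ j * γ l) (B j l)
      = ∑ j : Fin d, ∑ l : Fin d,
        Matrix.toEuclideanCLM (𝕜 := ℂ) (γ l * γ j) (B j l) := by
    rw [Finset.sum_comm]
    refine Finset.sum_congr rfl fun j _ => Finset.sum_congr rfl fun l _ => ?_
    rw [hB j l]
  set S := ∑ j : Fin d, ∑ l : Fin d, Matrix.toEuclideanCLM (𝕜 := ℂ) (γ j * γ l) (B j l) with hS
  have htwo : S + S = (∑ j : Fin d, B j j) + ∑ j : Fin d, B j j := by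
    calc S + S
        = ∑ j : Fin d, ∑ l : Fin d,
            (Matrix.toEuclideanCLM (𝕜 := ℂ) (γ j * γ l) (B j l) +
             Matrix.toEuclideanCLM (𝕜 := ℂ) (γ l * γ j) (B j l)) := by
          nth_rewrite 2 [hS]
          rw [hswap, add_comm, ← Finset.sum_add_distrib]
          refine Finset.sum_congr rfl fun j _ => ?_
          rw [← Finset.sum_add_distrib]
      _ = ∑ j : Fin d, ∑ l : Fin d,
            Matrix.toEuclideanCLM (𝕜 := ℂ) (γ j * γ l + γ l * γ j) (B j l) := by
          refine Finset.sum_congr rfl fun j _ => Finset.sum_congr rfl fun l _ => ?_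
          rw [map_add, ContinuousLinearMap.add_apply]
      _ = ∑ j : Fin d, ∑ l : Fin d, (if j = l then B j l + B j l else 0) := by
          refine Finset.sum_congr rfl fun j _ => Finset.sum_congr rfl fun l _ => ?_
          rw [hγ.2 j l]
          by_cases h : j = l
          · simp only [h, if_true]
            have h2 : (2 : Matrix (Fin N) (Fin N) ℂ) = 1 + 1 := by norm_num
            rw [h2, map_add, ContinuousLinearMap.add_apply, map_one,
              ContinuousLinearMap.one_apply]
          · simp only [h, if_false]
            rw [map_zero, ContinuousLinearMap.zero_apply]
      _ = (∑ j : Fin d, B j j) + ∑ j : Fin d, B j j := by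
          rw [← Finset.sum_add_distrib]
          refine Finset.sum_congr rfl fun j _ => ?_
          rw [Finset.sum_ite_eq (Finset.univ : Finset (Fin d)) j (fun l => B j l + B j l)]
          simp
  have h2S : (2 : ℂ) • S = (2 : ℂ) • ∑ j : Fin d, B j j := by
    rw [two_smul, two_smul]
    exact htwo
  exact smul_right_injective (V N) (two_ne_zero) h2S

lemma lapOp_eq {φ : E d → V N} (hφ : ContDiff ℝ (⊤ : ℕ∞) φ) (x : E d) :
    lapOp φ x = ∑ j : Fin d, fderiv ℝ (fderiv ℝ φ) x (e j) (e j) := by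
  unfold lapOp
  refine Finset.sum_congr rfl fun j _ => ?_
  have : (fun y => fderiv ℝ φ y (e j)) = pd j φ := rfl
  rw [this, (hasFDerivAt_pd hφ j x).fderiv]
  rfl

/-- The square of the Dirac operator is minus the Laplacian. -/
lemma dirac_dirac {γ : Fin d → Matrix (Fin N) (Fin N) ℂ} (hγ : IsGammaFamily γ)
    {φ : E d → V N} (hφ : ContDiff ℝ (⊤ : ℕ∞) φ) (x : E d) :
    diracOp γ (diracOp γ φ) x = - lapOp φ x := by
  have hBsymm : ∀ v w : E d, fderiv ℝ (fderiv ℝ φ) x v w = fderiv ℝ (fderiv ℝ φ) x w v := by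
    intro v w
    exact (hφ.contDiffAt.isSymmSndFDerivAt (by simp; exact WithTop.coe_le_coe.2 (le_top : (2:ℕ∞) ≤ ⊤))) v w
  rw [diracOp_eq]
  have step : ∀ j : Fin d, (-Complex.I) • Gm γ j (pd j (diracOp γ φ) x) =
      -∑ l : Fin d, Matrix.toEuclideanCLM (𝕜 := ℂ) (γ j * γ l)
        (fderiv ℝ (fderiv ℝ φ) x (e j) (e l)) := by
    intro j
    rw [pd_dirac hφ j x, map_sum, Finset.smul_sum, ← Finset.sum_neg_distrib]
    refine Finset.sum_congr rfl fun l _ => ?_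
    rw [_root_.map_smul, smul_smul]
    have : (-Complex.I) * (-Complex.I) = -1 := by
      rw [neg_mul_neg, Complex.I_mul_I]
    rw [this, neg_one_smul]
    congr 1
    rw [map_mul]
    rfl
  rw [Finset.sum_congr rfl (fun j _ => step j), Finset.sum_neg_distrib,
    symm_sum hγ (fun j l => fderiv ℝ (fderiv ℝ φ) x (e j) (e l))
      (fun j l => hBsymm _ _), lapOp_eq hφ x]

end NCGDaux
namespace NCGDaux
open NCGD MeasureTheory Filter

variable {d N : ℕ} {Ω : Set (E d)}

lemma memL2_ccs {f : E d → V N} (hf : Continuous f) (hc : HasCompactSupport f) :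
    MemLp f 2 (volume.restrict Ω) :=
  (hf.memLp_of_hasCompactSupport (μ := volume) (p := 2) hc).restrict Ω

lemma isTestFun_pd {φ : E d → V N} (hφ : IsTestFun Ω φ) (j : Fin d) :
    IsTestFun Ω (pd j φ) :=
  ⟨contDiff_pd hφ.1 j, hcs_pd hφ.2.1 j, (tsupport_pd j).trans hφ.2.2⟩

/-- Test function as an element of `L²(Ω)`. -/
def tfLp (Ω : Set (E d)) {f : E d → V N} (hf : IsTestFun Ω f) : Hsp d N Ω :=
  (memL2_ccs hf.1.continuous hf.2.1).toLp f

lemma tfLp_coe {f : E d → V N} (hf : IsTestFun Ω f) :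
    ⇑(tfLp Ω hf) =ᵐ[volume.restrict Ω] f :=
  MemLp.coeFn_toLp _

lemma integral_inner_congr_right (g : E d → V N) {u u' : E d → V N}
    (h : u' =ᵐ[volume.restrict Ω] u) :
    ∫ x in Ω, (inner ℂ (g x) (u' x) : ℂ) = ∫ x in Ω, (inner ℂ (g x) (u x) : ℂ) := by
  apply integral_congr_ae
  filter_upwards [h] with x hx
  rw [hx]

lemma integral_inner_congr_left (g : E d → V N) {u u' : E d → V N}
    (h : u' =ᵐ[volume.restrict Ω] u) :
    ∫ x in Ω, (inner ℂ (u' x) (g x) : ℂ) = ∫ x in Ω, (inner ℂ (u x) (g x) : ℂ) := by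
  apply integral_congr_ae
  filter_upwards [h] with x hx
  rw [hx]

lemma inner_tfLp {f : E d → V N} (hf : IsTestFun Ω f) (u : Hsp d N Ω) :
    (inner ℂ (tfLp Ω hf) u : ℂ) = ∫ x in Ω, (inner ℂ (f x) (u x) : ℂ) := by
  rw [L2.inner_def]
  exact integral_inner_congr_left _ (tfLp_coe hf)

lemma inDomD_tfLp {γ : Fin d → Matrix (Fin N) (Fin N) ℂ} (hγ : IsGammaFamily γ)
    {φ : E d → V N} (hφ : IsTestFun Ω φ) :
    InDomD Ω γ (tfLp Ω hφ) (tfLp Ω (isTestFun_dirac γ hφ)) := by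
  constructor
  · refine ⟨fun j => tfLp Ω (isTestFun_pd hφ j), fun j ψ hψ => ?_, fun _ => φ,
      fun _ => hφ, ?_, fun j => ?_⟩
    · rw [integral_inner_congr_right _ (tfLp_coe hφ),
        show (-∫ x in Ω, (inner ℂ (ψ x) (tfLp Ω (isTestFun_pd hφ j) x) : ℂ)) =
          -∫ x in Ω, (inner ℂ (ψ x) (pd j φ x) : ℂ) by
            rw [integral_inner_congr_right _ (tfLp_coe (isTestFun_pd hφ j))]]
      exact ibp hψ hφ.1 j
    · have : (fun n : ℕ => ∫ x in Ω, ‖φ x - (tfLp Ω hφ) x‖ ^ 2) = fun _ => 0 := by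
        funext n
        rw [show (0:ℝ) = ∫ x in Ω, (0:ℝ) from (integral_zero _ _).symm]
        apply integral_congr_ae
        filter_upwards [tfLp_coe hφ] with x hx
        rw [hx]
        simp
      rw [this]
      exact tendsto_const_nhds
    · have : (fun n : ℕ => ∫ x in Ω,
          ‖fderiv ℝ φ x (EuclideanSpace.single j 1) - (tfLp Ω (isTestFun_pd hφ j)) x‖ ^ 2)
          = fun _ => 0 := by
        funext n
        rw [show (0:ℝ) = ∫ x in Ω, (0:ℝ) from (integral_zero _ _).symm]
        apply integral_congr_ae
        filter_upwards [tfLp_coe (isTestFun_pd hφ j)] with x hx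
        rw [hx]
        simp [pd]
      rw [this]
      exact tendsto_const_nhds
  · intro ψ hψ
    rw [integral_inner_congr_right _ (tfLp_coe hφ),
      integral_inner_congr_right _ (tfLp_coe (isTestFun_dirac γ hφ))]
    exact dirac_symm hγ hψ hφ.1

end NCGDaux
namespace NCGDaux
open NCGD MeasureTheory Filter

variable {d N : ℕ} {Ω : Set (E d)}

lemma isTestFun_lap {φ : E d → V N} (hφ : IsTestFun Ω φ) : IsTestFun Ω (lapOp φ) := by
  have heq : lapOp φ = fun x => ∑ j : Fin d, pd j (pd j φ) x := rfl
  have hsub : ∀ x, x ∉ tsupport φ → lapOp φ x = 0 := by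
    intro x hx
    rw [heq]
    apply Finset.sum_eq_zero
    intro j _
    by_contra h
    exact hx (tsupport_pd j (tsupport_pd j (subset_closure h)))
  refine ⟨?_, ?_, ?_⟩
  · rw [heq]
    exact ContDiff.sum fun j _ => contDiff_pd (contDiff_pd hφ.1 j) j
  · apply IsCompact.of_isClosed_subset hφ.2.1 isClosed_closure
    apply closure_minimal _ isClosed_closure
    intro x hx
    by_contra hxx
    exact hx (hsub x hxx)
  · refine (closure_minimal ?_ isClosed_closure).trans hφ.2.2
    intro x hx
    by_contra hxx
    exact hx (hsub x hxx)

lemma integrable_inner_tf {f : E d → V N} (hf : IsTestFun Ω f) (u : Hsp d N Ω) :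
    Integrable (fun x => (inner ℂ (f x) (u x) : ℂ)) (volume.restrict Ω) := by
  have h := L2.integrable_inner (𝕜 := ℂ) (tfLp Ω hf) u
  apply h.congr
  filter_upwards [tfLp_coe hf] with x hx
  rw [hx]

lemma integrable_inner_helm {φ : E d → V N} (hφ : IsTestFun Ω φ) (u : Hsp d N Ω) :
    Integrable (fun x => (inner ℂ (φ x - lapOp φ x) (u x) : ℂ)) (volume.restrict Ω) :=
  ((integrable_inner_tf hφ u).sub (integrable_inner_tf (isTestFun_lap hφ) u)).congr
    (Eventually.of_forall fun x => (inner_sub_left _ _ _).symm)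

/-- Key computation: if `u ∈ dom`, `D u = w` weakly, `D w = z` weakly and `u + z = ξ`
then `∫ ⟪(1-Δ)φ, u⟫ = ∫ ⟪φ, ξ⟫` for all test functions `φ`. -/
lemma key {γ : Fin d → Matrix (Fin N) (Fin N) ℂ} (hγ : IsGammaFamily γ)
    {φ : E d → V N} (hφ : IsTestFun Ω φ) {u w z ξ : Hsp d N Ω}
    (hu : ∀ ψ : E d → V N, IsTestFun Ω ψ →
      ∫ x in Ω, (inner ℂ (diracOp γ ψ x) (u x) : ℂ) = ∫ x in Ω, (inner ℂ (ψ x) (w x) : ℂ))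
    (hw : ∀ ψ : E d → V N, IsTestFun Ω ψ →
      ∫ x in Ω, (inner ℂ (diracOp γ ψ x) (w x) : ℂ) = ∫ x in Ω, (inner ℂ (ψ x) (z x) : ℂ))
    (hsum : u + z = ξ) :
    ∫ x in Ω, (inner ℂ (φ x - lapOp φ x) (u x) : ℂ) = ∫ x in Ω, (inner ℂ (φ x) (ξ x) : ℂ) := by
  have h1 : ∫ x in Ω, (inner ℂ (diracOp γ (diracOp γ φ) x) (u x) : ℂ)
      = ∫ x in Ω, (inner ℂ (φ x) (z x) : ℂ) :=
    (hu _ (isTestFun_dirac γ hφ)).trans (hw _ hφ)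
  have h2 : ∫ x in Ω, (inner ℂ (diracOp γ (diracOp γ φ) x) (u x) : ℂ)
      = -∫ x in Ω, (inner ℂ (lapOp φ x) (u x) : ℂ) := by
    rw [← integral_neg]
    apply integral_congr_ae
    filter_upwards with x
    rw [dirac_dirac hγ hφ.1 x, inner_neg_left]
  have hξ : ⇑ξ =ᵐ[volume.restrict Ω] fun x => u x + z x := by
    rw [← hsum]; exact Lp.coeFn_add u z
  calc ∫ x in Ω, (inner ℂ (φ x - lapOp φ x) (u x) : ℂ)
      = (∫ x in Ω, (inner ℂ (φ x) (u x) : ℂ)) - ∫ x in Ω, (inner ℂ (lapOp φ x) (u x) : ℂ) := by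
        rw [← integral_sub (integrable_inner_tf hφ u) (integrable_inner_tf (isTestFun_lap hφ) u)]
        apply integral_congr_ae
        filter_upwards with x
        rw [inner_sub_left]
    _ = (∫ x in Ω, (inner ℂ (φ x) (u x) : ℂ)) + ∫ x in Ω, (inner ℂ (φ x) (z x) : ℂ) := by
        rw [← h1, h2]; ring
    _ = ∫ x in Ω, (inner ℂ (φ x) (ξ x) : ℂ) := by
        rw [← integral_add (integrable_inner_tf hφ u) (integrable_inner_tf hφ z)]
        apply integral_congr_ae
        filter_upwards [hξ] with x hx
        rw [hx, inner_add_right]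

end NCGDaux
open NCGD MeasureTheory in
/-- Let `D` be the Dirichlet Dirac operator on `Ω`, `P` the orthogonal
projection of `L₂` onto the (closed) subspace of solutions of the Helmholtz equation
`(1−Δ)u = 0`, and `T := (1+D*D)^{-1} − (1+DD*)^{-1}`.  Then `T = (1⊗P)T`. -/
theorem stmt17 (d N : ℕ) (hd : 2 ≤ d) (hN : N = 2 ^ (d / 2))
    (γ : Fin d → Matrix (Fin N) (Fin N) ℂ) (hγ : IsGammaFamily γ)
    (Ω : Set (E d)) (hΩ : IsOpen Ω)
    (P : Hsp d N Ω →L[ℂ] Hsp d N Ω) (hP : IsSelfAdjoint P)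
    (hPrange : ∀ ξ : Hsp d N Ω, IsHelmholtz Ω (P ξ))
    (hPfix : ∀ v : Hsp d N Ω, IsHelmholtz Ω v → P v = v)
    (Rd : Hsp d N Ω →L[ℂ] Hsp d N Ω) (hRd : IsRes1DstarD Ω γ Rd)
    (Rds : Hsp d N Ω →L[ℂ] Hsp d N Ω) (hRds : IsRes1DDstar Ω γ Rds) :
    Rd - Rds = P * (Rd - Rds) := by
  refine ContinuousLinearMap.ext fun ξ => ?_
  have hHelm : IsHelmholtz Ω ((Rd - Rds) ξ) := by
    intro φ hφ
    obtain ⟨w1, z1, hd1, hadj1, hsum1⟩ := hRd ξ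
    obtain ⟨w2, z2, hadj2, hd2, hsum2⟩ := hRds ξ
    have hu1 : ∀ ψ : E d → V N, IsTestFun Ω ψ →
        ∫ x in Ω, (inner ℂ (diracOp γ ψ x) ((Rd ξ) x) : ℂ) =
          ∫ x in Ω, (inner ℂ (ψ x) (w1 x) : ℂ) := fun ψ hψ => hd1.2 ψ hψ
    have hw1 : ∀ ψ : E d → V N, IsTestFun Ω ψ →
        ∫ x in Ω, (inner ℂ (diracOp γ ψ x) (w1 x) : ℂ) =
          ∫ x in Ω, (inner ℂ (ψ x) (z1 x) : ℂ) := by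
      intro ψ hψ
      have h := hadj1 (NCGDaux.tfLp Ω hψ) (NCGDaux.tfLp Ω (NCGDaux.isTestFun_dirac γ hψ))
        (NCGDaux.inDomD_tfLp hγ hψ)
      rwa [NCGDaux.inner_tfLp (NCGDaux.isTestFun_dirac γ hψ) w1, NCGDaux.inner_tfLp hψ z1] at h
    have hu2 : ∀ ψ : E d → V N, IsTestFun Ω ψ →
        ∫ x in Ω, (inner ℂ (diracOp γ ψ x) ((Rds ξ) x) : ℂ) =
          ∫ x in Ω, (inner ℂ (ψ x) (w2 x) : ℂ) := by
      intro ψ hψ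
      have h := hadj2 (NCGDaux.tfLp Ω hψ) (NCGDaux.tfLp Ω (NCGDaux.isTestFun_dirac γ hψ))
        (NCGDaux.inDomD_tfLp hγ hψ)
      rwa [NCGDaux.inner_tfLp (NCGDaux.isTestFun_dirac γ hψ) (Rds ξ),
        NCGDaux.inner_tfLp hψ w2] at h
    have hw2 : ∀ ψ : E d → V N, IsTestFun Ω ψ →
        ∫ x in Ω, (inner ℂ (diracOp γ ψ x) (w2 x) : ℂ) =
          ∫ x in Ω, (inner ℂ (ψ x) (z2 x) : ℂ) := fun ψ hψ => hd2.2 ψ hψ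
    have k1 := NCGDaux.key hγ hφ hu1 hw1 hsum1
    have k2 := NCGDaux.key hγ hφ hu2 hw2 hsum2
    have hc : ⇑((Rd - Rds) ξ) =ᵐ[volume.restrict Ω] fun x => (Rd ξ) x - (Rds ξ) x := by
      rw [ContinuousLinearMap.sub_apply]
      exact Lp.coeFn_sub _ _
    rw [NCGDaux.integral_inner_congr_right _ hc]
    have hsplit : ∫ x in Ω, (inner ℂ (φ x - lapOp φ x) ((Rd ξ) x - (Rds ξ) x) : ℂ)
        = (∫ x in Ω, (inner ℂ (φ x - lapOp φ x) ((Rd ξ) x) : ℂ))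
          - ∫ x in Ω, (inner ℂ (φ x - lapOp φ x) ((Rds ξ) x) : ℂ) := by
      rw [← integral_sub (NCGDaux.integrable_inner_helm hφ (Rd ξ))
        (NCGDaux.integrable_inner_helm hφ (Rds ξ))]
      apply integral_congr_ae
      filter_upwards with x
      rw [inner_sub_right]
    rw [hsplit, k1, k2, sub_self]
  have hfix := hPfix _ hHelm
  rw [ContinuousLinearMap.mul_apply]
  exact hfix.symm
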